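/- Let $G = \mathrm{SU}(2)$ with $\widehat{G} = \{\pi_n : n \ge 0\}$, $d_{\pi_n} = n+1$, and consider the Lie derivative point derivation $D$ at the identity along the torus direction, whose matricial coefficients are $D_{\pi_n} = i\,\mathrm{diag}(n, n-2, \dots, 2-n, -n)$. For $\alpha \ge 0$ and $1 \le p \le \infty$ with conjugate exponent $p'$, $D$ extends to a bounded linear functional on $\mathrm{A}^p(\mathrm{SU}(2), d^\alpha)$, i.e., $\sup_n (n+1)^{-\alpha - 1/p'}\|D_{\pi_n}\|_{\mathrm{S}^{p'}_{n+1}} < \infty$, if and only if $\alpha \ge 1$. -/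

import Mathlib

open scoped ENNReal

/-- The singular values of a complex square matrix: square roots of the eigenvalues of `Aᴴ * A`. -/
noncomputable def singularValues {n : Type*} [Fintype n] [DecidableEq n]
    (A : Matrix n n ℂ) : n → ℝ :=
  fun i => Real.sqrt ((Matrix.isHermitian_conjTranspose_mul_self A).eigenvalues i)

/-- The Schatten `p`-norm of a complex square matrix, i.e. the `ℓ^p` norm of its
singular values (with the supremum when `p = ∞`). -/
noncomputable def schattenNorm {n : Type*} [Fintype n] [DecidableEq n]
    (p : ℝ≥0∞) (A : Matrix n n ℂ) : ℝ :=
  if p = ∞ then ⨆ i, singularValues A i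
  else (∑ i, singularValues A i ^ p.toReal) ^ (1 / p.toReal)

open Polynomial in
lemma charpoly_conj_aux {k : Type*} [Fintype k] [DecidableEq k] {R : Type*} [CommRing R]
    (U M V : Matrix k k R) (h : U * V = 1) : (U * M * V).charpoly = M.charpoly := by
  have hUV : U.map C * V.map C = 1 := by
    rw [← Matrix.map_mul, h, Matrix.map_one _ (map_zero C) (map_one C)]
  have hdet : (U.map C).det * (V.map C).det = 1 := by
    rw [← Matrix.det_mul, hUV, Matrix.det_one]
  have hmap : (U * M * V).charmatrix = U.map C * M.charmatrix * V.map C := by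
    have hsc : U.map C * Matrix.scalar k (X : R[X]) * V.map C = Matrix.scalar k (X : R[X]) := by
      rw [(Matrix.scalar_commute (X : R[X]) (fun r' => Commute.all _ _) (U.map C)).symm.eq,
        mul_assoc, hUV, mul_one]
    rw [Matrix.charmatrix, Matrix.charmatrix, mul_sub, sub_mul, hsc]
    congr 1
    simp only [RingHom.mapMatrix_apply, Matrix.map_mul]
  rw [Matrix.charpoly, Matrix.charpoly, hmap, Matrix.det_mul, Matrix.det_mul]
  ring_nf
  rw [mul_comm ((U.map C).det), mul_assoc, hdet, mul_one]

open Polynomial in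
lemma charpoly_diagonal_eq {k : Type*} [Fintype k] [DecidableEq k] {R : Type*} [CommRing R]
    (v : k → R) : (Matrix.diagonal v).charpoly = ∏ i, (X - C (v i)) := by
  have : (Matrix.diagonal v).charmatrix = Matrix.diagonal (fun i => X - C (v i)) := by
    ext i j
    by_cases hij : i = j
    · subst hij; simp [Matrix.charmatrix_apply, Matrix.diagonal_apply_eq]
    · simp [Matrix.charmatrix_apply, Matrix.diagonal_apply_ne _ hij, hij]
  rw [Matrix.charpoly, this, Matrix.det_diagonal]

open Polynomial in
lemma eigvals_diagonal_multiset {k : Type*} [Fintype k] [DecidableEq k] (d : k → ℝ)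
    (hA : Matrix.IsHermitian (Matrix.diagonal (fun j => (d j : ℂ)))) :
    Multiset.map hA.eigenvalues Finset.univ.val = Multiset.map d Finset.univ.val := by
  have hU : (hA.eigenvectorUnitary : Matrix k k ℂ) * (star hA.eigenvectorUnitary : Matrix k k ℂ)
      = 1 := Matrix.mem_unitaryGroup_iff.mp hA.eigenvectorUnitary.2
  have h1 : (Matrix.diagonal (fun j => (d j : ℂ))).charpoly
      = (Matrix.diagonal (RCLike.ofReal ∘ hA.eigenvalues : k → ℂ)).charpoly := by
    conv_lhs => rw [hA.spectral_theorem]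
    exact charpoly_conj_aux _ _ _ hU
  rw [charpoly_diagonal_eq, charpoly_diagonal_eq] at h1
  have h2 := congrArg Polynomial.roots h1
  rw [Finset.prod_eq_multiset_prod, Finset.prod_eq_multiset_prod,
    show (fun i => X - C ((d i : ℂ))) = (fun a => X - C a) ∘ (fun i => (d i : ℂ)) from rfl,
    show (fun i => X - C ((RCLike.ofReal ∘ hA.eigenvalues : k → ℂ) i))
      = (fun a => X - C a) ∘ (fun i => ((hA.eigenvalues i : ℝ) : ℂ)) from rfl,
    ← Multiset.map_map, ← Multiset.map_map,
    Polynomial.roots_multiset_prod_X_sub_C, Polynomial.roots_multiset_prod_X_sub_C] at h2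
  apply Multiset.map_injective (f := (Complex.ofReal : ℝ → ℂ)) Complex.ofReal_injective
  rw [Multiset.map_map, Multiset.map_map]
  exact h2.symm

open Matrix in
lemma eig_congr {k : Type*} [Fintype k] [DecidableEq k] {A B : Matrix k k ℂ} (h : A = B)
    (hA : A.IsHermitian) (hB : B.IsHermitian) : hA.eigenvalues = hB.eigenvalues := by
  subst h; rfl

open Matrix in
lemma sv_diag_multiset {k : Type*} [Fintype k] [DecidableEq k] (d : k → ℝ) :
    Multiset.map (singularValues (Matrix.diagonal fun j => Complex.I * (d j : ℂ)))
        Finset.univ.val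
      = Multiset.map (fun j => |d j|) Finset.univ.val := by
  set A := Matrix.diagonal fun j : k => Complex.I * (d j : ℂ) with hAdef
  have hB : Aᴴ * A = Matrix.diagonal (fun j => ((d j ^ 2 : ℝ) : ℂ)) := by
    rw [hAdef, Matrix.diagonal_conjTranspose, Matrix.diagonal_mul_diagonal]
    congr 1
    funext j
    simp only [Pi.star_apply, star_mul', Complex.star_def, Complex.conj_I, Complex.conj_ofReal]
    push_cast
    ring_nf
    rw [Complex.I_sq]
    ring
  have hD : (Matrix.diagonal (fun j => ((d j ^ 2 : ℝ) : ℂ))).IsHermitian :=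
    hB ▸ Matrix.isHermitian_conjTranspose_mul_self A
  have hsv : singularValues A = fun i => Real.sqrt (hD.eigenvalues i) := by
    funext i
    unfold singularValues
    rw [eig_congr hB (Matrix.isHermitian_conjTranspose_mul_self A) hD]
  rw [hsv, show (fun i => Real.sqrt (hD.eigenvalues i)) = Real.sqrt ∘ hD.eigenvalues from rfl,
    ← Multiset.map_map, eigvals_diagonal_multiset _ hD, Multiset.map_map]
  congr 1
  funext j
  simp [Real.sqrt_sq_eq_abs]

lemma sum_pow_transfer {k : Type*} [Fintype k] {f g : k → ℝ}
    (h : Multiset.map f Finset.univ.val = Multiset.map g Finset.univ.val) (t : ℝ) :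
    ∑ i, f i ^ t = ∑ i, g i ^ t := by
  rw [Finset.sum_eq_multiset_sum, Finset.sum_eq_multiset_sum,
    show (fun i => f i ^ t) = (fun x => x ^ t) ∘ f from rfl,
    show (fun i => g i ^ t) = (fun x => x ^ t) ∘ g from rfl,
    ← Multiset.map_map, ← Multiset.map_map, h]

lemma sup_transfer {k : Type*} [Fintype k] {f g : k → ℝ}
    (h : Multiset.map f Finset.univ.val = Multiset.map g Finset.univ.val) :
    ⨆ i, f i = ⨆ i, g i := by
  have hr : Set.range f = Set.range g := by
    ext x
    have hf : x ∈ Set.range f ↔ x ∈ Multiset.map f Finset.univ.val := by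
      simp [Set.mem_range, eq_comm]
    have hg : x ∈ Set.range g ↔ x ∈ Multiset.map g Finset.univ.val := by
      simp [Set.mem_range, eq_comm]
    rw [hf, hg, h]
  rw [← sSup_range, ← sSup_range, hr]

lemma unbounded_rpow_aux {c C : ℝ} (hc : 0 < c)
    (h : ∀ N : ℕ, ∃ x : ℝ, (N : ℝ) ≤ x ∧ x ^ c ≤ C) : False := by
  have hC : 0 < C := by
    obtain ⟨x, hx1, hx2⟩ := h 1
    have h1 : (1 : ℝ) ≤ x ^ c := by
      calc (1:ℝ) = 1 ^ c := (Real.one_rpow c).symm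
      _ ≤ x ^ c := Real.rpow_le_rpow zero_le_one (by exact_mod_cast hx1) hc.le
    linarith
  obtain ⟨N, hN⟩ := exists_nat_gt (C ^ (1 / c))
  obtain ⟨x, hx1, hx2⟩ := h N
  have hlt : C ^ (1 / c) < x := lt_of_lt_of_le hN hx1
  have : C < x ^ c := by
    calc C = (C ^ (1 / c)) ^ c := by
          rw [← Real.rpow_mul hC.le, one_div_mul_cancel hc.ne', Real.rpow_one]
    _ < x ^ c := Real.rpow_lt_rpow (Real.rpow_nonneg hC.le _) hlt hc
  linarith

/-- For `SU(2)`, the Lie derivative point derivation `D` along the torus direction, with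
matricial coefficients `D_{π_n} = i diag(n, n-2, …, 2-n, -n)`, extends to a bounded linear
functional on `A^p(SU(2), d^α)` — i.e. `sup_n (n+1)^{-α-1/p'} ‖D_{π_n}‖_{S^{p'}_{n+1}} < ∞`
where `p'` is the conjugate exponent of `p` — if and only if `α ≥ 1`. -/
theorem su2_derivation_bounded_iff (α : ℝ) (hα : 0 ≤ α) (p q : ℝ≥0∞) (hp : 1 ≤ p)
    (hpq : 1 / p + 1 / q = 1) :
    (∃ M : ℝ, ∀ n : ℕ,
      ((n : ℝ) + 1) ^ (-α - 1 / q.toReal) *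
        schattenNorm q (Matrix.diagonal fun j : Fin (n + 1) =>
          Complex.I * Complex.ofReal ((n : ℝ) - 2 * ((j : ℕ) : ℝ))) ≤ M) ↔ 1 ≤ α := by
  have key : ∀ n : ℕ,
      Multiset.map (singularValues (Matrix.diagonal fun j : Fin (n + 1) =>
          Complex.I * Complex.ofReal ((n : ℝ) - 2 * ((j : ℕ) : ℝ)))) Finset.univ.val
        = Multiset.map (fun j : Fin (n + 1) => |(n : ℝ) - 2 * ((j : ℕ) : ℝ)|)
            Finset.univ.val := fun n => sv_diag_multiset _
  have habs_le : ∀ (n : ℕ) (j : Fin (n + 1)), |(n : ℝ) - 2 * ((j : ℕ) : ℝ)| ≤ (n : ℝ) + 1 := by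
    intro n j
    have hj : ((j : ℕ) : ℝ) ≤ n := by exact_mod_cast Nat.lt_succ_iff.mp j.isLt
    have hj0 : (0 : ℝ) ≤ ((j : ℕ) : ℝ) := Nat.cast_nonneg _
    rw [abs_le]; constructor <;> nlinarith
  rcases eq_or_ne q ∞ with hq | hq
  · -- q = ∞
    subst hq
    have hsup : ∀ n : ℕ,
        schattenNorm ∞ (Matrix.diagonal fun j : Fin (n + 1) =>
          Complex.I * Complex.ofReal ((n : ℝ) - 2 * ((j : ℕ) : ℝ)))
        = ⨆ j : Fin (n + 1), |(n : ℝ) - 2 * ((j : ℕ) : ℝ)| := by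
      intro n
      rw [schattenNorm, if_pos rfl]
      exact sup_transfer (key n)
    simp only [ENNReal.toReal_top, div_zero, sub_zero, hsup]
    constructor
    · rintro ⟨M, hM⟩
      by_contra hα1
      push_neg at hα1
      refine unbounded_rpow_aux (c := 1 - α) (C := 2 * M) (by linarith) fun N => ?_
      set n : ℕ := N + 1 with hn
      have hx1 : (1 : ℝ) ≤ (n : ℝ) := by exact_mod_cast Nat.le_add_left 1 N
      refine ⟨(n : ℝ) + 1, by push_cast [hn]; linarith, ?_⟩
      have hpos : (0 : ℝ) < (n : ℝ) + 1 := by linarith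
      have hge : (n : ℝ) ≤ ⨆ j : Fin (n + 1), |(n : ℝ) - 2 * ((j : ℕ) : ℝ)| := by
        have := le_ciSup (Set.Finite.bddAbove (Set.finite_range
          (fun j : Fin (n + 1) => |(n : ℝ) - 2 * ((j : ℕ) : ℝ)|))) (0 : Fin (n + 1))
        simpa using this
      have h1 : ((n : ℝ) + 1) ^ (-α) * (n : ℝ) ≤ M :=
        le_trans (mul_le_mul_of_nonneg_left hge (Real.rpow_nonneg hpos.le _)) (hM n)
      have h2 : ((n : ℝ) + 1) ^ (1 - α) = ((n : ℝ) + 1) ^ (-α) * ((n : ℝ) + 1) := by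
        rw [show (1 : ℝ) - α = -α + 1 by ring, Real.rpow_add hpos, Real.rpow_one]
      have hP : (0 : ℝ) < ((n : ℝ) + 1) ^ (-α) := Real.rpow_pos_of_pos hpos _
      nlinarith
    · intro h1
      refine ⟨1, fun n => ?_⟩
      have hpos : (0 : ℝ) < (n : ℝ) + 1 := by positivity
      have hle : (⨆ j : Fin (n + 1), |(n : ℝ) - 2 * ((j : ℕ) : ℝ)|) ≤ (n : ℝ) + 1 :=
        ciSup_le (habs_le n)
      calc ((n : ℝ) + 1) ^ (-α) * (⨆ j : Fin (n + 1), |(n : ℝ) - 2 * ((j : ℕ) : ℝ)|)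
          ≤ ((n : ℝ) + 1) ^ (-α) * ((n : ℝ) + 1) :=
            mul_le_mul_of_nonneg_left hle (Real.rpow_nonneg hpos.le _)
        _ = ((n : ℝ) + 1) ^ (1 - α) := by
            rw [show (1 : ℝ) - α = -α + 1 by ring, Real.rpow_add hpos, Real.rpow_one]
        _ ≤ 1 := Real.rpow_le_one_of_one_le_of_nonpos (by linarith) (by linarith)
  · -- q finite
    have hq1 : 1 ≤ q := by
      have h1 : 1 / q ≤ 1 := le_trans (self_le_add_left (1 / q) (1 / p)) hpq.le
      rw [one_div] at h1
      exact ENNReal.inv_le_one.mp h1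
    have ht1 : (1 : ℝ) ≤ q.toReal := by
      have := ENNReal.toReal_mono hq hq1
      simpa using this
    set t := q.toReal with htdef
    have ht0 : (0 : ℝ) < t := by linarith
    have hnorm : ∀ n : ℕ,
        schattenNorm q (Matrix.diagonal fun j : Fin (n + 1) =>
          Complex.I * Complex.ofReal ((n : ℝ) - 2 * ((j : ℕ) : ℝ)))
        = (∑ j : Fin (n + 1), |(n : ℝ) - 2 * ((j : ℕ) : ℝ)| ^ t) ^ (1 / t) := by
      intro n
      rw [schattenNorm, if_neg hq, sum_pow_transfer (key n)]
    simp only [hnorm]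
    constructor
    · rintro ⟨M, hM⟩
      by_contra hα1
      push_neg at hα1
      refine unbounded_rpow_aux (c := 1 - α) (C := 16 * M) (by linarith) fun N => ?_
      set m : ℕ := N + 1 with hm
      set n : ℕ := 4 * m with hn
      set x : ℝ := (n : ℝ) + 1 with hx
      have hm1 : (1 : ℝ) ≤ (m : ℝ) := by exact_mod_cast Nat.le_add_left 1 N
      have hxpos : (0 : ℝ) < x := by positivity
      refine ⟨x, by push_cast [hx, hn, hm]; linarith, ?_⟩
      set y : ℝ := (m : ℝ) + 1 with hy
      have hypos : (0 : ℝ) < y := by positivity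
      -- lower bound on the sum
      set T : Finset (Fin (n + 1)) :=
        Finset.image (fun j : Fin (m + 1) => (⟨(j : ℕ), by omega⟩ : Fin (n + 1)))
          Finset.univ with hT
      have hTcard : T.card = m + 1 := by
        rw [hT, Finset.card_image_of_injective _ (fun a b hab => by
          apply Fin.ext; simpa using congrArg Fin.val hab)]
        simp
      have hTmem : ∀ j ∈ T, y ^ t ≤ |(n : ℝ) - 2 * ((j : ℕ) : ℝ)| ^ t := by
        intro j hj
        rw [hT, Finset.mem_image] at hj
        obtain ⟨j', -, rfl⟩ := hj
        have hj'm : ((j' : ℕ) : ℝ) ≤ (m : ℝ) := by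
          exact_mod_cast Nat.lt_succ_iff.mp j'.isLt
        have hval : y ≤ (n : ℝ) - 2 * ((j' : ℕ) : ℝ) := by
          push_cast [hy, hn, hm] at hj'm ⊢; linarith
        have habs : y ≤ |(n : ℝ) - 2 * ((j' : ℕ) : ℝ)| :=
          le_trans hval (le_abs_self _)
        exact Real.rpow_le_rpow hypos.le habs ht0.le
      have hsum_lower : y * y ^ t ≤ ∑ j : Fin (n + 1), |(n : ℝ) - 2 * ((j : ℕ) : ℝ)| ^ t := by
        calc y * y ^ t = (T.card : ℝ) * y ^ t := by rw [hTcard]; push_cast [hy]; ring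
          _ = T.card • (y ^ t) := by rw [nsmul_eq_mul]
          _ ≤ ∑ j ∈ T, |(n : ℝ) - 2 * ((j : ℕ) : ℝ)| ^ t := Finset.card_nsmul_le_sum _ _ _ hTmem
          _ ≤ ∑ j : Fin (n + 1), |(n : ℝ) - 2 * ((j : ℕ) : ℝ)| ^ t :=
            Finset.sum_le_sum_of_subset_of_nonneg (Finset.subset_univ T)
              (fun j _ _ => Real.rpow_nonneg (abs_nonneg _) _)
      set e : ℝ := 1 / t + 1 with he
      have hyy : y * y ^ t = y ^ (1 + t) := by rw [Real.rpow_add hypos, Real.rpow_one]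
      have hroot : y ^ e ≤ (∑ j : Fin (n + 1), |(n : ℝ) - 2 * ((j : ℕ) : ℝ)| ^ t) ^ (1 / t) := by
        have h1 := Real.rpow_le_rpow (by positivity) (hyy ▸ hsum_lower) (by positivity : (0:ℝ) ≤ 1 / t)
        rwa [← Real.rpow_mul hypos.le, show (1 + t) * (1 / t) = e by
          rw [he]; field_simp] at h1
      -- from y ≥ x / 4
      have hxy : x / 4 ≤ y := by push_cast [hx, hy, hn]; linarith
      have he2 : e ≤ 2 := by
        rw [he]
        have : 1 / t ≤ 1 := by
          rw [div_le_one ht0]; exact ht1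
        linarith
      have he0 : (0 : ℝ) ≤ e := by positivity
      have hxe : x ^ e / 16 ≤ y ^ e := by
        have h1 : (x / 4) ^ e ≤ y ^ e := Real.rpow_le_rpow (by positivity) hxy he0
        have h2 : (x / 4) ^ e = x ^ e / (4 : ℝ) ^ e := Real.div_rpow hxpos.le (by norm_num : (0:ℝ) ≤ 4) e
        have h3 : (4 : ℝ) ^ e ≤ 16 := by
          calc (4 : ℝ) ^ e ≤ (4 : ℝ) ^ (2 : ℝ) :=
                Real.rpow_le_rpow_of_exponent_le (by norm_num) he2
            _ = 16 := by
                rw [show (2 : ℝ) = ((2 : ℕ) : ℝ) by norm_num, Real.rpow_natCast]; norm_num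
        have h4 : x ^ e / 16 ≤ x ^ e / (4 : ℝ) ^ e := by
          apply div_le_div_of_nonneg_left (Real.rpow_nonneg hxpos.le _) (by positivity) h3
        linarith
      have hPpos : (0 : ℝ) < x ^ (-α - 1 / t) := Real.rpow_pos_of_pos hxpos _
      have hchain : x ^ (-α - 1 / t) * (x ^ e / 16) ≤ M := by
        calc x ^ (-α - 1 / t) * (x ^ e / 16)
            ≤ x ^ (-α - 1 / t) * y ^ e := mul_le_mul_of_nonneg_left hxe hPpos.le
          _ ≤ x ^ (-α - 1 / t) *
              (∑ j : Fin (n + 1), |(n : ℝ) - 2 * ((j : ℕ) : ℝ)| ^ t) ^ (1 / t) :=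
              mul_le_mul_of_nonneg_left hroot hPpos.le
          _ ≤ M := hM n
      have hfinal : x ^ (-α - 1 / t) * x ^ e = x ^ (1 - α) := by
        rw [← Real.rpow_add hxpos, he]; ring_nf
      rw [show x ^ (-α - 1 / t) * (x ^ e / 16) = x ^ (-α - 1 / t) * x ^ e / 16 by ring,
        hfinal] at hchain
      linarith
    · intro h1
      refine ⟨1, fun n => ?_⟩
      have hpos : (0 : ℝ) < (n : ℝ) + 1 := by positivity
      set x : ℝ := (n : ℝ) + 1 with hx
      have hsum_upper : ∑ j : Fin (n + 1), |(n : ℝ) - 2 * ((j : ℕ) : ℝ)| ^ t ≤ x * x ^ t := by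
        calc ∑ j : Fin (n + 1), |(n : ℝ) - 2 * ((j : ℕ) : ℝ)| ^ t
            ≤ ∑ _j : Fin (n + 1), x ^ t :=
              Finset.sum_le_sum fun j _ => Real.rpow_le_rpow (abs_nonneg _) (habs_le n j) ht0.le
          _ = x * x ^ t := by
              rw [Finset.sum_const, Finset.card_univ, Fintype.card_fin, nsmul_eq_mul]
              push_cast [hx]; ring
      have hxx : x * x ^ t = x ^ (1 + t) := by rw [Real.rpow_add hpos, Real.rpow_one]
      set e : ℝ := 1 / t + 1 with he
      have hroot : (∑ j : Fin (n + 1), |(n : ℝ) - 2 * ((j : ℕ) : ℝ)| ^ t) ^ (1 / t) ≤ x ^ e := by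
        have h2 := Real.rpow_le_rpow
          (Finset.sum_nonneg fun j _ => Real.rpow_nonneg (abs_nonneg _) _)
          (hxx ▸ hsum_upper) (by positivity : (0:ℝ) ≤ 1 / t)
        rwa [← Real.rpow_mul hpos.le, show (1 + t) * (1 / t) = e by rw [he]; field_simp] at h2
      have hPpos : (0 : ℝ) < x ^ (-α - 1 / t) := Real.rpow_pos_of_pos hpos _
      calc x ^ (-α - 1 / t) * (∑ j : Fin (n + 1), |(n : ℝ) - 2 * ((j : ℕ) : ℝ)| ^ t) ^ (1 / t)
          ≤ x ^ (-α - 1 / t) * x ^ e := mul_le_mul_of_nonneg_left hroot hPpos.le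
        _ = x ^ (1 - α) := by rw [← Real.rpow_add hpos, he]; ring_nf
        _ ≤ 1 := Real.rpow_le_one_of_one_le_of_nonpos (by rw [hx]; linarith) (by linarith)
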